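/- arXiv:1202.5578 — 2 statements merged into one kernel-verified Lean document; each statement's English description precedes it below -/
import Mathlib

section
/- With notation as in the blowup of a quasitoric orbifold along a face with $\lambda_0 = \sum_{j=1}^k b_j \lambda_j$: if $b_i < 1$ for each $i = 1, \ldots, k$, then for every vertex $w$ of $F$ and every vertex $v_i$ in the preimage of $w$ under the blowdown, $o(G_{v_i}) < o(G_w)$, i.e., the blowdown is a resolution. -/
/-- If `b_i < 1` for each `i ≤ k`, then the blowdown is a resolution: the order
`o(G_{v_i}) = |det Λ_{v_i}|` of the local group at each new vertex `v_i` is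
strictly smaller than `o(G_w) = |det Λ_w|`. -/
theorem stmt_6 (n k : ℕ) (hk : k ≤ n) (A : Matrix (Fin n) (Fin n) ℚ)
    (hdet : A.det ≠ 0)
    (b : Fin n → ℚ) (hbpos : ∀ j : Fin n, (j : ℕ) < k → 0 < b j)
    (hbzero : ∀ j : Fin n, ¬ (j : ℕ) < k → b j = 0)
    (hblt : ∀ j : Fin n, (j : ℕ) < k → b j < 1)
    (i : Fin n) (hi : (i : ℕ) < k) :
    |(A.updateCol i (fun r => ∑ j, b j * A r j)).det| < |A.det| := by
  have h : (A.updateCol i (fun r => ∑ j, b j * A r j)).det = b i * A.det := by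
    simpa using Matrix.det_updateCol_sum A i b
  rw [h, abs_mul]
  have h1 : |b i| = b i := abs_of_pos (hbpos i hi)
  rw [h1]
  have := hblt i hi
  nlinarith [abs_pos.mpr hdet, hbpos i hi]
end

section
/- Quasi-SL is preserved under crepant blowup: let $\lambda_1, \ldots, \lambda_n \in \mathbb{Z}^n$ be linearly independent, $\lambda_0 = \sum_{j=1}^k b_j \lambda_j$ with $b_j > 0$ and $\sum_{j=1}^k b_j = 1$. Suppose that for every $\eta \in \mathbb{Z}^n$ written as $\eta = \sum_{j=1}^n (m_j + a_j)\lambda_j$ with $m_j \in \mathbb{Z}$, $a_j \in [0,1) \cap \mathbb{Q}$, the sum $\sum_{j=1}^n a_j$ is an integer. Then for every $\eta \in \mathbb{Z}^n$ of the form $\eta = c_0 \lambda_0 + \sum_{j=2}^n c_j \lambda_j$ with $c_j \in [0,1) \cap \mathbb{Q}$ (here $c_0$ replaces the coefficient of $\lambda_1$ and $b_1 > 0$), the sum $c_0 + \sum_{j=2}^n c_j$ is an integer. -/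
/-- Quasi-SL is preserved under crepant blowup: if all ages at the vertex `w`
(with characteristic vectors `λ₁, …, λₙ`) are integers, then all ages at the
new vertex `v₁` (with characteristic vectors `λ₀ = ∑_{j<k} b_j λ_j, λ₂, …, λₙ`,
where `b_j > 0` and `∑ b_j = 1`) are integers. Indices are `Fin n`, with
index `0` playing the role of `1`. -/
theorem stmt_12 (n k : ℕ) (hn : 0 < n) (hk1 : 1 ≤ k) (hk : k ≤ n)
    (lam : Fin n → (Fin n → ℤ))
    (hli : LinearIndependent ℚ (fun j => fun i => ((lam j i : ℚ))))
    (b : Fin n → ℚ) (hbpos : ∀ j : Fin n, (j : ℕ) < k → 0 < b j)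
    (hbzero : ∀ j : Fin n, ¬ (j : ℕ) < k → b j = 0)
    (hbsum : ∑ j, b j = 1)
    (lam0 : Fin n → ℚ) (hlam0 : lam0 = ∑ j, b j • (fun r => (lam j r : ℚ)))
    (hSL : ∀ (η : Fin n → ℤ) (m : Fin n → ℤ) (a : Fin n → ℚ),
      (∀ j, 0 ≤ a j ∧ a j < 1) →
      ((fun i => (η i : ℚ)) = ∑ j, ((m j : ℚ) + a j) • (fun r => (lam j r : ℚ))) →
      ∃ z : ℤ, (∑ j, a j) = z) :
    ∀ (η : Fin n → ℤ) (c : Fin n → ℚ),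
      (∀ j, 0 ≤ c j ∧ c j < 1) →
      ((fun i => (η i : ℚ)) = c ⟨0, hn⟩ • lam0 +
        ∑ j ∈ Finset.univ.erase ⟨0, hn⟩, c j • (fun r => (lam j r : ℚ))) →
      ∃ z : ℤ, (∑ j, c j) = z := by
  intro η c hc hη
  set i0 : Fin n := ⟨0, hn⟩ with hi0
  set d : Fin n → ℚ := fun j => c i0 * b j + (if j = i0 then 0 else c j) with hd
  have hif : ∑ j, (if j = i0 then (0:ℚ) else c j) • (fun r => (lam j r : ℚ))
      = ∑ j ∈ Finset.univ.erase i0, c j • (fun r => (lam j r : ℚ)) := by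
    rw [← Finset.sum_erase_add _ _ (Finset.mem_univ i0), if_pos rfl, zero_smul,
      add_zero]
    exact Finset.sum_congr rfl fun j hj => by
      rw [if_neg (Finset.mem_erase.mp hj).1]
  have key : (fun i => (η i : ℚ)) =
      ∑ j, ((⌊d j⌋ : ℚ) + Int.fract (d j)) • (fun r => (lam j r : ℚ)) := by
    have hfl : ∀ j : Fin n, ((⌊d j⌋ : ℚ) + Int.fract (d j)) = d j :=
      fun j => Int.floor_add_fract _
    simp_rw [hfl]
    rw [hη, hlam0, Finset.smul_sum]
    have h1 : ∀ j : Fin n, d j • (fun r => (lam j r : ℚ)) =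
        (c i0 * b j) • (fun r => (lam j r : ℚ)) +
        (if j = i0 then (0:ℚ) else c j) • (fun r => (lam j r : ℚ)) := by
      intro j; rw [hd, add_smul]
    simp_rw [h1]
    rw [Finset.sum_add_distrib, hif]
    congr 1
    exact Finset.sum_congr rfl fun j _ => by rw [smul_smul]
  obtain ⟨z, hz⟩ := hSL η (fun j => ⌊d j⌋) (fun j => Int.fract (d j))
    (fun j => ⟨Int.fract_nonneg _, Int.fract_lt_one _⟩) key
  refine ⟨(∑ j, ⌊d j⌋) + z, ?_⟩
  have hifc : ∑ j, (if j = i0 then (0:ℚ) else c j)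
      = ∑ j ∈ Finset.univ.erase i0, c j := by
    rw [← Finset.sum_erase_add _ _ (Finset.mem_univ i0), if_pos rfl, add_zero]
    exact Finset.sum_congr rfl fun j hj => by rw [if_neg (Finset.mem_erase.mp hj).1]
  have hsum_d : ∑ j, d j = ∑ j, c j := by
    rw [hd]
    rw [Finset.sum_add_distrib, ← Finset.mul_sum, hbsum, mul_one, hifc,
      Finset.add_sum_erase _ _ (Finset.mem_univ i0)]
  have : ∑ j, d j = (∑ j, (⌊d j⌋ : ℚ)) + ∑ j, Int.fract (d j) := by
    rw [← Finset.sum_add_distrib]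
    exact Finset.sum_congr rfl fun j _ => (Int.floor_add_fract _).symm
  rw [← hsum_d, this, hz]
  push_cast
  ring
end
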